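/- Let G and H be finite simple graphs such that H has at least one vertex, and let h be a surjective p-morphism from Pos(G) onto Pos(H). Then h({⊤₁, ⊤₂}) = {⊤₁, ⊤₂}. -/
import Mathlib


/-- The carrier of the poset `Pos(G)`: vertices, two copies of the vertices,
two copies of the edges, and four auxiliary elements. -/
inductive PosElem (V E : Type) : Type where
  | ver (v : V)
  | verA (v : V)
  | verB (v : V)
  | edge1 (e : E)
  | edge2 (e : E)
  | top1
  | top2
  | infA
  | infB

/-- The covering relation of the poset `Pos(G)`, for a graph `G` together with a
choice `ε` of an ordered pair of endpoints for each edge. -/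
inductive PosCov {V : Type} (G : SimpleGraph V) (ε : ↥G.edgeSet → V × V) :
    PosElem V ↥G.edgeSet → PosElem V ↥G.edgeSet → Prop where
  | ver_verA (v : V) : PosCov G ε (.ver v) (.verA v)
  | ver_verB (v : V) : PosCov G ε (.ver v) (.verB v)
  | verA_infA (v : V) : PosCov G ε (.verA v) .infA
  | verB_infB (v : V) : PosCov G ε (.verB v) .infB
  | edge1_top1 (e : ↥G.edgeSet) : PosCov G ε (.edge1 e) .top1
  | edge1_top2 (e : ↥G.edgeSet) : PosCov G ε (.edge1 e) .top2
  | edge2_top1 (e : ↥G.edgeSet) : PosCov G ε (.edge2 e) .top1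
  | edge2_top2 (e : ↥G.edgeSet) : PosCov G ε (.edge2 e) .top2
  | isolA_top1 (v : V) (hv : ∀ w, ¬ G.Adj v w) : PosCov G ε (.verA v) .top1
  | isolA_top2 (v : V) (hv : ∀ w, ¬ G.Adj v w) : PosCov G ε (.verA v) .top2
  | isolB_top1 (v : V) (hv : ∀ w, ¬ G.Adj v w) : PosCov G ε (.verB v) .top1
  | isolB_top2 (v : V) (hv : ∀ w, ¬ G.Adj v w) : PosCov G ε (.verB v) .top2
  | ua_edge1 (e : ↥G.edgeSet) : PosCov G ε (.verA (ε e).1) (.edge1 e)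
  | vb_edge1 (e : ↥G.edgeSet) : PosCov G ε (.verB (ε e).2) (.edge1 e)
  | ub_edge2 (e : ↥G.edgeSet) : PosCov G ε (.verB (ε e).1) (.edge2 e)
  | va_edge2 (e : ↥G.edgeSet) : PosCov G ε (.verA (ε e).2) (.edge2 e)

/-- The order of `Pos(G)`: the reflexive-transitive closure of the covering relation. -/
def PosLe {V : Type} (G : SimpleGraph V) (ε : ↥G.edgeSet → V × V)
    (x y : PosElem V ↥G.edgeSet) : Prop :=
  Relation.ReflTransGen (PosCov G ε) x y

/-- `ε` assigns to every edge an ordered pair of its two endpoints. -/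
def OrientOK {V : Type} (G : SimpleGraph V) (ε : ↥G.edgeSet → V × V) : Prop :=
  ∀ e : ↥G.edgeSet, (e : Sym2 V) = s((ε e).1, (ε e).2)

/-- A p-morphism with respect to given order relations: the homomorphism property (HP)
and the backward property (BP). -/
def IsPMorphismRel {α β : Type} (leP : α → α → Prop) (leQ : β → β → Prop)
    (h : α → β) : Prop :=
  (∀ x y, leP x y → leQ (h x) (h y)) ∧
  (∀ (x : α) (y : β), leQ (h x) y → ∃ z : α, leP x z ∧ h z = y)

namespace TopAux

variable {V : Type} {G : SimpleGraph V} {ε : ↥G.edgeSet → V × V}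

lemma closed_le {S : PosElem V ↥G.edgeSet → Prop}
    (hS : ∀ x y, S x → PosCov G ε x y → S y) {x y : PosElem V ↥G.edgeSet}
    (hx : S x) (hxy : PosLe G ε x y) : S y := by
  induction hxy with
  | refl => exact hx
  | tail _ hcov ih => exact hS _ _ ih hcov

/-- Elements from which `infB` is unreachable (contains `verA _`). -/
def AUp : PosElem V E → Prop
  | .ver _ => False
  | .verB _ => False
  | .infB => False
  | _ => True

/-- Elements from which `infA` is unreachable (contains `verB _`). -/
def BUp : PosElem V E → Prop
  | .ver _ => False
  | .verA _ => False
  | .infA => False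
  | _ => True

/-- Elements reachable from an edge element. -/
def EUp : PosElem V E → Prop
  | .edge1 _ => True
  | .edge2 _ => True
  | .top1 => True
  | .top2 => True
  | _ => False

lemma AUp_le {x y : PosElem V ↥G.edgeSet} (hx : AUp x) (hxy : PosLe G ε x y) : AUp y := by
  refine closed_le (fun a b ha hc => ?_) hx hxy
  cases hc <;> first | trivial | exact ((ha : False)).elim

lemma BUp_le {x y : PosElem V ↥G.edgeSet} (hx : BUp x) (hxy : PosLe G ε x y) : BUp y := by
  refine closed_le (fun a b ha hc => ?_) hx hxy
  cases hc <;> first | trivial | exact ((ha : False)).elim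

lemma EUp_le {x y : PosElem V ↥G.edgeSet} (hx : EUp x) (hxy : PosLe G ε x y) : EUp y := by
  refine closed_le (fun a b ha hc => ?_) hx hxy
  cases hc <;> first | trivial | exact ((ha : False)).elim

lemma not_verA_le_infB (u : V) : ¬ PosLe G ε (.verA u) .infB :=
  fun hle => (AUp_le (x := PosElem.verA u) (by trivial) hle : AUp (.infB : PosElem V ↥G.edgeSet))

lemma not_verB_le_infA (u : V) : ¬ PosLe G ε (.verB u) .infA :=
  fun hle => (BUp_le (x := PosElem.verB u) (by trivial) hle : BUp (.infA : PosElem V ↥G.edgeSet))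

lemma le_of_top1 {y : PosElem V ↥G.edgeSet} (hy : PosLe G ε .top1 y) : y = .top1 := by
  refine closed_le (S := fun a => a = .top1) (fun a b ha hc => ?_) rfl hy
  subst ha; cases hc

lemma le_of_top2 {y : PosElem V ↥G.edgeSet} (hy : PosLe G ε .top2 y) : y = .top2 := by
  refine closed_le (S := fun a => a = .top2) (fun a b ha hc => ?_) rfl hy
  subst ha; cases hc

lemma le_of_infA {y : PosElem V ↥G.edgeSet} (hy : PosLe G ε .infA y) : y = .infA := by
  refine closed_le (S := fun a => a = .infA) (fun a b ha hc => ?_) rfl hy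
  subst ha; cases hc

lemma le_of_infB {y : PosElem V ↥G.edgeSet} (hy : PosLe G ε .infB y) : y = .infB := by
  refine closed_le (S := fun a => a = .infB) (fun a b ha hc => ?_) rfl hy
  subst ha; cases hc

lemma exists_top (x : PosElem V ↥G.edgeSet) :
    ∃ m : PosElem V ↥G.edgeSet,
      (m = .top1 ∨ m = .top2 ∨ m = .infA ∨ m = .infB) ∧ PosLe G ε x m := by
  cases x with
  | ver v => exact ⟨.infA, by simp, .head (.ver_verA v) (.single (.verA_infA v))⟩
  | verA v => exact ⟨.infA, by simp, .single (.verA_infA v)⟩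
  | verB v => exact ⟨.infB, by simp, .single (.verB_infB v)⟩
  | edge1 e => exact ⟨.top1, by simp, .single (.edge1_top1 e)⟩
  | edge2 e => exact ⟨.top1, by simp, .single (.edge2_top1 e)⟩
  | top1 => exact ⟨.top1, by simp, .refl⟩
  | top2 => exact ⟨.top2, by simp, .refl⟩
  | infA => exact ⟨.infA, by simp, .refl⟩
  | infB => exact ⟨.infB, by simp, .refl⟩

lemma hub (hε : OrientOK G ε) (v : V) :
    PosLe G ε (.verA v) .top1 ∧ PosLe G ε (.verA v) .top2 ∧
      PosLe G ε (.verB v) .top1 ∧ PosLe G ε (.verB v) .top2 := by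
  by_cases hiso : ∀ w, ¬ G.Adj v w
  · exact ⟨.single (.isolA_top1 v hiso), .single (.isolA_top2 v hiso),
      .single (.isolB_top1 v hiso), .single (.isolB_top2 v hiso)⟩
  · push_neg at hiso
    obtain ⟨w, hw⟩ := hiso
    have hmem : s(v, w) ∈ G.edgeSet := G.mem_edgeSet.mpr hw
    set e : ↥G.edgeSet := ⟨s(v, w), hmem⟩ with he_def
    have he : s(v, w) = s((ε e).1, (ε e).2) := hε e
    rw [Sym2.eq_iff] at he
    rcases he with ⟨h1, -⟩ | ⟨h1, -⟩
    · refine ⟨.head ?_ (.single (.edge1_top1 e)), .head ?_ (.single (.edge1_top2 e)),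
        .head ?_ (.single (.edge2_top1 e)), .head ?_ (.single (.edge2_top2 e))⟩
      · rw [h1]; exact .ua_edge1 e
      · rw [h1]; exact .ua_edge1 e
      · rw [h1]; exact .ub_edge2 e
      · rw [h1]; exact .ub_edge2 e
    · refine ⟨.head ?_ (.single (.edge2_top1 e)), .head ?_ (.single (.edge2_top2 e)),
        .head ?_ (.single (.edge1_top1 e)), .head ?_ (.single (.edge1_top2 e))⟩
      · rw [h1]; exact .va_edge2 e
      · rw [h1]; exact .va_edge2 e
      · rw [h1]; exact .vb_edge1 e
      · rw [h1]; exact .vb_edge1 e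

lemma ver_le_infA (u : V) : PosLe G ε (.ver u) .infA :=
  .head (.ver_verA u) (.single (.verA_infA u))

lemma ver_le_infB (u : V) : PosLe G ε (.ver u) .infB :=
  .head (.ver_verB u) (.single (.verB_infB u))

lemma ver_le_top1 (hε : OrientOK G ε) (u : V) : PosLe G ε (.ver u) .top1 :=
  .head (.ver_verA u) (hub hε u).1

lemma ver_le_top2 (hε : OrientOK G ε) (u : V) : PosLe G ε (.ver u) .top2 :=
  .head (.ver_verA u) (hub hε u).2.1

end TopAux

theorem top_maps_onto_top {VG VH : Type} [Fintype VG] [Fintype VH] [Nonempty VH]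
    (G : SimpleGraph VG) (H : SimpleGraph VH)
    (εG : ↥G.edgeSet → VG × VG) (hεG : OrientOK G εG)
    (εH : ↥H.edgeSet → VH × VH) (hεH : OrientOK H εH)
    (h : PosElem VG ↥G.edgeSet → PosElem VH ↥H.edgeSet)
    (hsurj : Function.Surjective h)
    (hpm : IsPMorphismRel (PosLe G εG) (PosLe H εH) h) :
    h '' {PosElem.top1, PosElem.top2} = {PosElem.top1, PosElem.top2} := by
  classical
  obtain ⟨hHP, hBP⟩ := hpm
  have maxT1 : ∀ w, PosLe H εH .top1 w → w = .top1 := fun w hw => TopAux.le_of_top1 hw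
  have maxT2 : ∀ w, PosLe H εH .top2 w → w = .top2 := fun w hw => TopAux.le_of_top2 hw
  have maxIA : ∀ w, PosLe H εH .infA w → w = .infA := fun w hw => TopAux.le_of_infA hw
  have maxIB : ∀ w, PosLe H εH .infB w → w = .infB := fun w hw => TopAux.le_of_infB hw
  have reach : ∀ (x : PosElem VG ↥G.edgeSet) (y : PosElem VH ↥H.edgeSet),
      (∀ w, PosLe H εH y w → w = y) → PosLe H εH (h x) y →
      ∃ m : PosElem VG ↥G.edgeSet,
        (m = .top1 ∨ m = .top2 ∨ m = .infA ∨ m = .infB) ∧ PosLe G εG x m ∧ h m = y := by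
    intro x y hy hxy
    obtain ⟨z, hxz, rfl⟩ := hBP x y hxy
    obtain ⟨m, hmT, hzm⟩ := TopAux.exists_top z
    exact ⟨m, hmT, hxz.trans hzm, hy _ (hHP _ _ hzm)⟩
  have covered : ∀ y : PosElem VH ↥H.edgeSet, (∀ w, PosLe H εH y w → w = y) →
      y = h .top1 ∨ y = h .top2 ∨ y = h .infA ∨ y = h .infB := by
    intro y hy
    obtain ⟨x, hx⟩ := hsurj y
    obtain ⟨m, hmT, -, hmy⟩ := reach x y hy (by rw [hx]; exact Relation.ReflTransGen.refl)
    rcases hmT with rfl | rfl | rfl | rfl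
    · exact Or.inl hmy.symm
    · exact Or.inr (Or.inl hmy.symm)
    · exact Or.inr (Or.inr (Or.inl hmy.symm))
    · exact Or.inr (Or.inr (Or.inr hmy.symm))
  obtain ⟨v⟩ := ‹Nonempty VH›
  have hubH := TopAux.hub hεH v
  have claimA : h PosElem.infB = PosElem.infB ∨ h PosElem.infA = PosElem.infB := by
    obtain ⟨x, hx⟩ := hsurj (PosElem.ver v)
    obtain ⟨z, hxz, hz⟩ := hBP x (PosElem.verA v)
      (by rw [hx]; exact .single (.ver_verA v))
    obtain ⟨m1, hm1T, hzm1, hm1⟩ := reach z .infA maxIA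
      (by rw [hz]; exact .single (.verA_infA v))
    obtain ⟨m2, hm2T, hzm2, hm2⟩ := reach z .top1 maxT1 (by rw [hz]; exact hubH.1)
    obtain ⟨m3, hm3T, hzm3, hm3⟩ := reach z .top2 maxT2 (by rw [hz]; exact hubH.2.1)
    have hcB := covered .infB maxIB
    cases z with
    | ver u =>
      exfalso
      have key : ∀ m : PosElem VG ↥G.edgeSet, PosLe G εG (.ver u) m → h m ≠ .infB := by
        intro m hum heq
        have h2 : PosLe H εH (.verA v) (h m) := by rw [← hz]; exact hHP _ _ hum
        rw [heq] at h2
        exact TopAux.not_verA_le_infB v h2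
      rcases hcB with hc | hc | hc | hc
      · exact key _ (TopAux.ver_le_top1 hεG u) hc.symm
      · exact key _ (TopAux.ver_le_top2 hεG u) hc.symm
      · exact key _ (TopAux.ver_le_infA u) hc.symm
      · exact key _ (TopAux.ver_le_infB u) hc.symm
    | verA u =>
      have k1 : m1 ≠ .infB := fun e => TopAux.not_verA_le_infB u (e ▸ hzm1)
      have k2 : m2 ≠ .infB := fun e => TopAux.not_verA_le_infB u (e ▸ hzm2)
      have k3 : m3 ≠ .infB := fun e => TopAux.not_verA_le_infB u (e ▸ hzm3)
      left
      rcases hm1T with rfl | rfl | rfl | rfl <;> rcases hm2T with rfl | rfl | rfl | rfl <;>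
        rcases hm3T with rfl | rfl | rfl | rfl <;>
        first
          | exact absurd rfl k1
          | exact absurd rfl k2
          | exact absurd rfl k3
          | exact absurd (hm1.symm.trans hm2) (by simp)
          | exact absurd (hm1.symm.trans hm3) (by simp)
          | exact absurd (hm2.symm.trans hm3) (by simp)
          | (rcases hcB with hc | hc | hc | hc <;>
              first
                | exact hc.symm
                | exact absurd (hc.trans hm1) (by simp)
                | exact absurd (hc.trans hm2) (by simp)
                | exact absurd (hc.trans hm3) (by simp))
    | verB u =>
      have k1 : m1 ≠ .infA := fun e => TopAux.not_verB_le_infA u (e ▸ hzm1)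
      have k2 : m2 ≠ .infA := fun e => TopAux.not_verB_le_infA u (e ▸ hzm2)
      have k3 : m3 ≠ .infA := fun e => TopAux.not_verB_le_infA u (e ▸ hzm3)
      right
      rcases hm1T with rfl | rfl | rfl | rfl <;> rcases hm2T with rfl | rfl | rfl | rfl <;>
        rcases hm3T with rfl | rfl | rfl | rfl <;>
        first
          | exact absurd rfl k1
          | exact absurd rfl k2
          | exact absurd rfl k3
          | exact absurd (hm1.symm.trans hm2) (by simp)
          | exact absurd (hm1.symm.trans hm3) (by simp)
          | exact absurd (hm2.symm.trans hm3) (by simp)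
          | (rcases hcB with hc | hc | hc | hc <;>
              first
                | exact hc.symm
                | exact absurd (hc.trans hm1) (by simp)
                | exact absurd (hc.trans hm2) (by simp)
                | exact absurd (hc.trans hm3) (by simp))
    | edge1 e =>
      exfalso
      have k1 := TopAux.EUp_le (by trivial) hzm1
      have k2 := TopAux.EUp_le (by trivial) hzm2
      have k3 := TopAux.EUp_le (by trivial) hzm3
      rcases hm1T with rfl | rfl | rfl | rfl <;>
        rcases hm2T with rfl | rfl | rfl | rfl <;>
        rcases hm3T with rfl | rfl | rfl | rfl <;>
        first
          | exact (k1 : False)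
          | exact (k2 : False)
          | exact (k3 : False)
          | exact absurd (hm1.symm.trans hm2) (by simp)
          | exact absurd (hm1.symm.trans hm3) (by simp)
          | exact absurd (hm2.symm.trans hm3) (by simp)
    | edge2 e =>
      exfalso
      have k1 := TopAux.EUp_le (by trivial) hzm1
      have k2 := TopAux.EUp_le (by trivial) hzm2
      have k3 := TopAux.EUp_le (by trivial) hzm3
      rcases hm1T with rfl | rfl | rfl | rfl <;>
        rcases hm2T with rfl | rfl | rfl | rfl <;>
        rcases hm3T with rfl | rfl | rfl | rfl <;>
        first
          | exact (k1 : False)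
          | exact (k2 : False)
          | exact (k3 : False)
          | exact absurd (hm1.symm.trans hm2) (by simp)
          | exact absurd (hm1.symm.trans hm3) (by simp)
          | exact absurd (hm2.symm.trans hm3) (by simp)
    | top1 =>
      exfalso
      have e1 := TopAux.le_of_top1 hzm1
      have e2 := TopAux.le_of_top1 hzm2
      rw [e1] at hm1; rw [e2] at hm2
      exact absurd (hm1.symm.trans hm2) (by simp)
    | top2 =>
      exfalso
      have e1 := TopAux.le_of_top2 hzm1
      have e2 := TopAux.le_of_top2 hzm2
      rw [e1] at hm1; rw [e2] at hm2
      exact absurd (hm1.symm.trans hm2) (by simp)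
    | infA =>
      exfalso
      have e1 := TopAux.le_of_infA hzm1
      have e2 := TopAux.le_of_infA hzm2
      rw [e1] at hm1; rw [e2] at hm2
      exact absurd (hm1.symm.trans hm2) (by simp)
    | infB =>
      exfalso
      have e1 := TopAux.le_of_infB hzm1
      have e2 := TopAux.le_of_infB hzm2
      rw [e1] at hm1; rw [e2] at hm2
      exact absurd (hm1.symm.trans hm2) (by simp)
  have claimB : h PosElem.infB = PosElem.infA ∨ h PosElem.infA = PosElem.infA := by
    obtain ⟨x, hx⟩ := hsurj (PosElem.ver v)
    obtain ⟨z, hxz, hz⟩ := hBP x (PosElem.verB v)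
      (by rw [hx]; exact .single (.ver_verB v))
    obtain ⟨m1, hm1T, hzm1, hm1⟩ := reach z .infB maxIB
      (by rw [hz]; exact .single (.verB_infB v))
    obtain ⟨m2, hm2T, hzm2, hm2⟩ := reach z .top1 maxT1 (by rw [hz]; exact hubH.2.2.1)
    obtain ⟨m3, hm3T, hzm3, hm3⟩ := reach z .top2 maxT2 (by rw [hz]; exact hubH.2.2.2)
    have hcA := covered .infA maxIA
    cases z with
    | ver u =>
      exfalso
      have key : ∀ m : PosElem VG ↥G.edgeSet, PosLe G εG (.ver u) m → h m ≠ .infA := by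
        intro m hum heq
        have h2 : PosLe H εH (.verB v) (h m) := by rw [← hz]; exact hHP _ _ hum
        rw [heq] at h2
        exact TopAux.not_verB_le_infA v h2
      rcases hcA with hc | hc | hc | hc
      · exact key _ (TopAux.ver_le_top1 hεG u) hc.symm
      · exact key _ (TopAux.ver_le_top2 hεG u) hc.symm
      · exact key _ (TopAux.ver_le_infA u) hc.symm
      · exact key _ (TopAux.ver_le_infB u) hc.symm
    | verA u =>
      have k1 : m1 ≠ .infB := fun e => TopAux.not_verA_le_infB u (e ▸ hzm1)
      have k2 : m2 ≠ .infB := fun e => TopAux.not_verA_le_infB u (e ▸ hzm2)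
      have k3 : m3 ≠ .infB := fun e => TopAux.not_verA_le_infB u (e ▸ hzm3)
      left
      rcases hm1T with rfl | rfl | rfl | rfl <;> rcases hm2T with rfl | rfl | rfl | rfl <;>
        rcases hm3T with rfl | rfl | rfl | rfl <;>
        first
          | exact absurd rfl k1
          | exact absurd rfl k2
          | exact absurd rfl k3
          | exact absurd (hm1.symm.trans hm2) (by simp)
          | exact absurd (hm1.symm.trans hm3) (by simp)
          | exact absurd (hm2.symm.trans hm3) (by simp)
          | (rcases hcA with hc | hc | hc | hc <;>
              first
                | exact hc.symm
                | exact absurd (hc.trans hm1) (by simp)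
                | exact absurd (hc.trans hm2) (by simp)
                | exact absurd (hc.trans hm3) (by simp))
    | verB u =>
      have k1 : m1 ≠ .infA := fun e => TopAux.not_verB_le_infA u (e ▸ hzm1)
      have k2 : m2 ≠ .infA := fun e => TopAux.not_verB_le_infA u (e ▸ hzm2)
      have k3 : m3 ≠ .infA := fun e => TopAux.not_verB_le_infA u (e ▸ hzm3)
      right
      rcases hm1T with rfl | rfl | rfl | rfl <;> rcases hm2T with rfl | rfl | rfl | rfl <;>
        rcases hm3T with rfl | rfl | rfl | rfl <;>
        first
          | exact absurd rfl k1
          | exact absurd rfl k2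
          | exact absurd rfl k3
          | exact absurd (hm1.symm.trans hm2) (by simp)
          | exact absurd (hm1.symm.trans hm3) (by simp)
          | exact absurd (hm2.symm.trans hm3) (by simp)
          | (rcases hcA with hc | hc | hc | hc <;>
              first
                | exact hc.symm
                | exact absurd (hc.trans hm1) (by simp)
                | exact absurd (hc.trans hm2) (by simp)
                | exact absurd (hc.trans hm3) (by simp))
    | edge1 e =>
      exfalso
      have k1 := TopAux.EUp_le (by trivial) hzm1
      have k2 := TopAux.EUp_le (by trivial) hzm2
      have k3 := TopAux.EUp_le (by trivial) hzm3
      rcases hm1T with rfl | rfl | rfl | rfl <;>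
        rcases hm2T with rfl | rfl | rfl | rfl <;>
        rcases hm3T with rfl | rfl | rfl | rfl <;>
        first
          | exact (k1 : False)
          | exact (k2 : False)
          | exact (k3 : False)
          | exact absurd (hm1.symm.trans hm2) (by simp)
          | exact absurd (hm1.symm.trans hm3) (by simp)
          | exact absurd (hm2.symm.trans hm3) (by simp)
    | edge2 e =>
      exfalso
      have k1 := TopAux.EUp_le (by trivial) hzm1
      have k2 := TopAux.EUp_le (by trivial) hzm2
      have k3 := TopAux.EUp_le (by trivial) hzm3
      rcases hm1T with rfl | rfl | rfl | rfl <;>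
        rcases hm2T with rfl | rfl | rfl | rfl <;>
        rcases hm3T with rfl | rfl | rfl | rfl <;>
        first
          | exact (k1 : False)
          | exact (k2 : False)
          | exact (k3 : False)
          | exact absurd (hm1.symm.trans hm2) (by simp)
          | exact absurd (hm1.symm.trans hm3) (by simp)
          | exact absurd (hm2.symm.trans hm3) (by simp)
    | top1 =>
      exfalso
      have e1 := TopAux.le_of_top1 hzm1
      have e2 := TopAux.le_of_top1 hzm2
      rw [e1] at hm1; rw [e2] at hm2
      exact absurd (hm1.symm.trans hm2) (by simp)
    | top2 =>
      exfalso
      have e1 := TopAux.le_of_top2 hzm1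
      have e2 := TopAux.le_of_top2 hzm2
      rw [e1] at hm1; rw [e2] at hm2
      exact absurd (hm1.symm.trans hm2) (by simp)
    | infA =>
      exfalso
      have e1 := TopAux.le_of_infA hzm1
      have e2 := TopAux.le_of_infA hzm2
      rw [e1] at hm1; rw [e2] at hm2
      exact absurd (hm1.symm.trans hm2) (by simp)
    | infB =>
      exfalso
      have e1 := TopAux.le_of_infB hzm1
      have e2 := TopAux.le_of_infB hzm2
      rw [e1] at hm1; rw [e2] at hm2
      exact absurd (hm1.symm.trans hm2) (by simp)
  have hab : (h PosElem.infA = PosElem.infA ∧ h PosElem.infB = PosElem.infB) ∨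
      (h PosElem.infA = PosElem.infB ∧ h PosElem.infB = PosElem.infA) := by
    rcases claimA with h1 | h1 <;> rcases claimB with h2 | h2
    · exact absurd (h1.symm.trans h2) (by simp)
    · exact Or.inl ⟨h2, h1⟩
    · exact Or.inr ⟨h1, h2⟩
    · exact absurd (h1.symm.trans h2) (by simp)
  have ht1 := covered .top1 maxT1
  have ht2 := covered .top2 maxT2
  rw [Set.image_pair]
  rcases hab with ⟨ha, hb⟩ | ⟨ha, hb⟩ <;> rw [ha, hb] at ht1 ht2 <;>
    rcases ht1 with h1 | h1 | h1 | h1 <;> rcases ht2 with h2 | h2 | h2 | h2 <;>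
    solve
      | simp at h1
      | simp at h2
      | exact absurd (h1.trans h2.symm) (by simp)
      | rw [← h1, ← h2]
      | rw [← h2, ← h1, Set.pair_comm]
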